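/- Estimates for infinitesimal rigid motions on measurable sets (Lemma 4.2). Let q ∈ [1,∞). There is a constant c = c(q) > 0 such that for every Borel set E ⊆ ℝ², every skew-symmetric A ∈ ℝ^{2×2} and every b ∈ ℝ², with a(x) = A·x + b, the following hold: (i) |E|^{1/2 + 1/q}·|A| ≤ c·‖a‖_{L^q(E)} and |E|^{1/2}·|A| ≤ c·sup_{x∈E} |A·x + b|; (ii) |E|^{1/2 + 1/q}·|A·x + b| ≤ c·d(E)·‖a‖_{L^q(E)} for every x ∈ E. -/

import Mathlib

open MeasureTheory Set
open scoped ENNReal NNReal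

noncomputable section

/-- The Euclidean plane. -/
abbrev E2 := EuclideanSpace ℝ (Fin 2)

/-- Frobenius norm of a `2 × 2` real matrix. -/
def matNorm (A : Matrix (Fin 2) (Fin 2) ℝ) : ℝ :=
  Real.sqrt (∑ i : Fin 2, ∑ j : Fin 2, (A i j) ^ 2)

/-- The infinitesimal rigid motion `a_{A,b} : x ↦ A x + b`. -/
def rigid (A : Matrix (Fin 2) (Fin 2) ℝ) (b : E2) : E2 → E2 :=
  fun x => Matrix.toEuclideanLin A x + b

/- ### Auxiliary lemmas -/

lemma E2_ball (x : E2) (r : ℝ) :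
    volume (Metric.ball x r) = ENNReal.ofReal r ^ 2 * ENNReal.ofReal Real.pi := by
  rw [EuclideanSpace.volume_ball]
  norm_num [Real.Gamma_two, Real.sq_sqrt Real.pi_nonneg]

lemma E2_closedBall (x : E2) (r : ℝ) :
    volume (Metric.closedBall x r) = ENNReal.ofReal r ^ 2 * ENNReal.ofReal Real.pi := by
  rw [EuclideanSpace.volume_closedBall]
  norm_num [Real.Gamma_two, Real.sq_sqrt Real.pi_nonneg]

lemma volume_le_diam (E : Set E2) :
    volume E ≤ ENNReal.ofReal Real.pi * EMetric.diam E ^ 2 := by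
  rcases E.eq_empty_or_nonempty with rfl | ⟨x, hx⟩
  · simp
  rcases eq_or_ne (EMetric.diam E) ⊤ with hd | hd
  · rw [hd]
    have h2 : ((⊤ : ℝ≥0∞)) ^ 2 = ⊤ := by simp
    rw [h2, ENNReal.mul_top (by simp [ENNReal.ofReal_eq_zero, not_le, Real.pi_pos])]
    exact le_top
  · have hsub : E ⊆ Metric.closedBall x (Metric.diam E) := fun y hy =>
      Metric.mem_closedBall.2
        (Metric.dist_le_diam_of_mem (Metric.isBounded_iff_ediam_ne_top.2 hd) hy hx)
    refine (measure_mono hsub).trans ?_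
    rw [E2_closedBall]
    rw [show ENNReal.ofReal (Metric.diam E) = EMetric.diam E from by
      rw [Metric.diam]; exact ENNReal.ofReal_toReal hd]
    rw [mul_comm]

lemma sqrt_volume_le (E : Set E2) :
    volume E ^ ((1:ℝ)/2) ≤ ENNReal.ofReal (Real.sqrt Real.pi) * EMetric.diam E := by
  have h := ENNReal.rpow_le_rpow (volume_le_diam E) (by norm_num : (0:ℝ) ≤ 1/2)
  refine h.trans_eq ?_
  rw [ENNReal.mul_rpow_of_nonneg _ _ (by norm_num)]
  congr 1
  · rw [ENNReal.ofReal_rpow_of_nonneg Real.pi_pos.le (by norm_num), ← Real.sqrt_eq_rpow]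
  · rw [← ENNReal.rpow_natCast (EMetric.diam E) 2, ← ENNReal.rpow_mul]
    norm_num

section skew
variable {A : Matrix (Fin 2) (Fin 2) ℝ} (hA : Matrix.transpose A = -A)
include hA

lemma skew00 : A 0 0 = 0 := by
  have := congrFun (congrFun hA 0) 0; simp [Matrix.transpose_apply] at this; linarith

lemma skew11 : A 1 1 = 0 := by
  have := congrFun (congrFun hA 1) 1; simp [Matrix.transpose_apply] at this; linarith

lemma skew01 : A 0 1 = -(A 1 0) := by
  have := congrFun (congrFun hA 1) 0; simp [Matrix.transpose_apply] at this; linarith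

lemma matNorm_skew : matNorm A = Real.sqrt 2 * |A 1 0| := by
  rw [matNorm, Fin.sum_univ_two]
  rw [Fin.sum_univ_two, Fin.sum_univ_two, skew00 hA, skew11 hA, skew01 hA]
  rw [← Real.sqrt_sq_eq_abs, ← Real.sqrt_mul (by norm_num)]
  ring_nf

lemma rigid_apply0 (b x : E2) : rigid A b x 0 = -(A 1 0) * x 1 + b 0 := by
  simp [rigid, Matrix.toEuclideanLin_apply, Matrix.mulVec, dotProduct,
    Fin.sum_univ_two, skew00 hA, skew01 hA]

lemma rigid_apply1 (b x : E2) : rigid A b x 1 = A 1 0 * x 0 + b 1 := by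
  simp [rigid, Matrix.toEuclideanLin_apply, Matrix.mulVec, dotProduct,
    Fin.sum_univ_two, skew11 hA]

lemma norm_rigid_eq (b : E2) (hω : A 1 0 ≠ 0) :
    ∀ x : E2, ‖rigid A b x‖ =
      |A 1 0| * dist x ((WithLp.equiv 2 (Fin 2 → ℝ)).symm ![-(b 1)/(A 1 0), b 0/(A 1 0)]) := by
  intro x
  set ω := A 1 0
  set x0 : E2 := (WithLp.equiv 2 (Fin 2 → ℝ)).symm ![-(b 1)/ω, b 0/ω] with hx0
  have h0 : x0 0 = -(b 1)/ω := rfl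
  have h1 : x0 1 = b 0/ω := rfl
  rw [dist_eq_norm, EuclideanSpace.norm_eq, EuclideanSpace.norm_eq]
  rw [Fin.sum_univ_two, Fin.sum_univ_two]
  have e0 : (x - x0) 0 = x 0 - x0 0 := rfl
  have e1 : (x - x0) 1 = x 1 - x0 1 := rfl
  rw [e0, e1, h0, h1, rigid_apply0 hA, rigid_apply1 hA,
    ← Real.sqrt_sq_eq_abs, ← Real.sqrt_mul (sq_nonneg ω)]
  congr 1
  simp only [Real.norm_eq_abs, sq_abs]
  field_simp
  ring

lemma norm_rigid_sub (b : E2) (x y : E2) :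
    ‖rigid A b x - rigid A b y‖ = |A 1 0| * dist x y := by
  rw [dist_eq_norm, EuclideanSpace.norm_eq, EuclideanSpace.norm_eq]
  rw [Fin.sum_univ_two, Fin.sum_univ_two]
  have e0 : (rigid A b x - rigid A b y) 0 = rigid A b x 0 - rigid A b y 0 := rfl
  have e1 : (rigid A b x - rigid A b y) 1 = rigid A b x 1 - rigid A b y 1 := rfl
  have f0 : (x - y) 0 = x 0 - y 0 := rfl
  have f1 : (x - y) 1 = x 1 - y 1 := rfl
  rw [e0, e1, f0, f1, rigid_apply0 hA, rigid_apply0 hA, rigid_apply1 hA, rigid_apply1 hA,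
    ← Real.sqrt_sq_eq_abs, ← Real.sqrt_mul (sq_nonneg (A 1 0))]
  congr 1
  simp only [Real.norm_eq_abs, sq_abs]
  ring

lemma rigid_const (hω : A 1 0 = 0) (b : E2) : rigid A b = fun _ => b := by
  funext x
  have h0 : rigid A b x 0 = b 0 := by rw [rigid_apply0 hA, hω]; ring
  have h1 : rigid A b x 1 = b 1 := by rw [rigid_apply1 hA, hω]; ring
  ext i
  fin_cases i
  · exact h0
  · exact h1

end skew

lemma continuous_rigid (A : Matrix (Fin 2) (Fin 2) ℝ) (b : E2) : Continuous (rigid A b) :=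
  ((Matrix.toEuclideanLin A).continuous_of_finiteDimensional).add continuous_const

/-- Core estimate for part (i). -/
lemma core1 (q : ℝ) (hq : 1 ≤ q) (E : Set E2) (hE : MeasurableSet E)
    (t : ℝ) (ht : 0 < t) (x0 : E2) (g : E2 → E2) (hg : ∀ x, ‖g x‖ = t * dist x x0) :
    volume E ^ ((1:ℝ)/2 + 1/q) * ENNReal.ofReal t ≤
      ENNReal.ofReal 6 * eLpNorm g (ENNReal.ofReal q) (volume.restrict E) := by
  have hq0 : (0:ℝ) < q := lt_of_lt_of_le one_pos hq
  have hp0 : ENNReal.ofReal q ≠ 0 := by simp only [Ne, ENNReal.ofReal_eq_zero, not_le]; linarith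
  have hpt : ENNReal.ofReal q ≠ ⊤ := ENNReal.ofReal_ne_top
  have hN : eLpNorm g (ENNReal.ofReal q) (volume.restrict E)
      = (∫⁻ x in E, ENNReal.ofReal (t * dist x x0) ^ q) ^ (1/q) := by
    rw [eLpNorm_eq_lintegral_rpow_enorm_toReal hp0 hpt, ENNReal.toReal_ofReal hq0.le]
    congr 1
    refine lintegral_congr fun x => ?_
    rw [← ofReal_norm, hg x]
  have hmeas : Measurable fun x : E2 => ENNReal.ofReal (t * dist x x0) ^ q := by
    fun_prop
  have key : ∀ r : ℝ,
      ENNReal.ofReal (t*r) ^ q * volume (E \ Metric.ball x0 r) ≤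
        ∫⁻ x in E, ENNReal.ofReal (t * dist x x0) ^ q := by
    intro r
    calc ENNReal.ofReal (t*r) ^ q * volume (E \ Metric.ball x0 r)
        = ∫⁻ _ in E \ Metric.ball x0 r, ENNReal.ofReal (t*r) ^ q :=
          (setLIntegral_const _ _).symm
      _ ≤ ∫⁻ x in E \ Metric.ball x0 r, ENNReal.ofReal (t * dist x x0) ^ q := by
          refine setLIntegral_mono hmeas fun x hx => ?_
          have hrd : r ≤ dist x x0 := not_lt.1 fun h => hx.2 (Metric.mem_ball.2 h)
          exact ENNReal.rpow_le_rpow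
            (ENNReal.ofReal_le_ofReal (mul_le_mul_of_nonneg_left hrd ht.le)) hq0.le
      _ ≤ ∫⁻ x in E, ENNReal.ofReal (t * dist x x0) ^ q :=
          lintegral_mono' (Measure.restrict_mono diff_subset le_rfl) le_rfl
  rcases eq_or_ne (volume E) 0 with h0 | h0
  · rw [h0, ENNReal.zero_rpow_of_pos (by positivity), zero_mul]; exact zero_le
  rcases eq_or_ne (volume E) ⊤ with htop | htop
  · have hsub : E ⊆ (E \ Metric.ball x0 1) ∪ Metric.ball x0 1 := fun y hy => by
      by_cases h : y ∈ Metric.ball x0 1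
      exacts [Or.inr h, Or.inl ⟨hy, h⟩]
    have hle := (measure_mono hsub).trans
      (measure_union_le (μ := volume) (E \ Metric.ball x0 1) (Metric.ball x0 1))
    rw [htop, top_le_iff] at hle
    have hballfin : volume (Metric.ball x0 1) ≠ ⊤ := by
      rw [E2_ball]
      exact ENNReal.mul_ne_top (by simp) ENNReal.ofReal_ne_top
    have h1 : volume (E \ Metric.ball x0 1) = ⊤ := by
      rcases ENNReal.add_eq_top.1 hle with h | h
      · exact h
      · exact absurd h hballfin
    have hc : ENNReal.ofReal (t*1) ^ q ≠ 0 :=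
      (ENNReal.rpow_pos (ENNReal.ofReal_pos.2 (by linarith)) ENNReal.ofReal_ne_top).ne'
    have hint : (∫⁻ x in E, ENNReal.ofReal (t * dist x x0) ^ q) = ⊤ := by
      refine top_le_iff.1 ?_
      calc (⊤:ℝ≥0∞) = ENNReal.ofReal (t*1) ^ q * ⊤ := (ENNReal.mul_top hc).symm
        _ = ENNReal.ofReal (t*1) ^ q * volume (E \ Metric.ball x0 1) := by rw [h1]
        _ ≤ _ := key 1
    rw [hN, hint, ENNReal.top_rpow_of_pos (by positivity), ENNReal.mul_top (by simp)]
    exact le_top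
  -- main case : 0 < volume E < ⊤
  set m := (volume E).toReal with hm
  have hm0 : 0 < m := ENNReal.toReal_pos h0 htop
  have hπ : (0:ℝ) < Real.pi := Real.pi_pos
  set r := Real.sqrt (m / (2*Real.pi)) with hrdef
  have hr0 : 0 < r := Real.sqrt_pos.2 (by positivity)
  have hball : volume (Metric.ball x0 r) = volume E / 2 := by
    rw [E2_ball, ← ENNReal.ofReal_pow hr0.le, hrdef, Real.sq_sqrt (by positivity),
      ← ENNReal.ofReal_mul (by positivity),
      show m / (2*Real.pi) * Real.pi = m/2 by field_simp,
      ENNReal.ofReal_div_of_pos two_pos, ENNReal.ofReal_ofNat]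
    rw [hm, ENNReal.ofReal_toReal htop]
  have hdiff : volume E / 2 ≤ volume (E \ Metric.ball x0 r) := by
    have hsub : E ⊆ (E \ Metric.ball x0 r) ∪ Metric.ball x0 r := fun y hy => by
      by_cases h : y ∈ Metric.ball x0 r
      exacts [Or.inr h, Or.inl ⟨hy, h⟩]
    have hle := (measure_mono hsub).trans
      (measure_union_le (μ := volume) (E \ Metric.ball x0 r) (Metric.ball x0 r))
    rw [hball] at hle
    have h2 := tsub_le_iff_right.2 hle
    rwa [ENNReal.sub_half htop] at h2
  have hint := le_trans (mul_le_mul_right hdiff _) (key r)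
  have hNlow : ENNReal.ofReal (t*r) * (volume E / 2) ^ ((1:ℝ)/q) ≤
      eLpNorm g (ENNReal.ofReal q) (volume.restrict E) := by
    rw [hN]
    calc ENNReal.ofReal (t*r) * (volume E / 2) ^ ((1:ℝ)/q)
        = (ENNReal.ofReal (t*r) ^ q * (volume E / 2)) ^ ((1:ℝ)/q) := by
          rw [ENNReal.mul_rpow_of_nonneg _ _ (by positivity), ← ENNReal.rpow_mul,
            mul_one_div_cancel hq0.ne', ENNReal.rpow_one]
      _ ≤ _ := ENNReal.rpow_le_rpow hint (by positivity)
  have hexp : volume E ^ ((1:ℝ)/2 + 1/q)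
      = ENNReal.ofReal (Real.sqrt m) * volume E ^ ((1:ℝ)/q) := by
    rw [ENNReal.rpow_add _ _ h0 htop]
    congr 1
    rw [← ENNReal.ofReal_toReal htop, ← hm,
      ENNReal.ofReal_rpow_of_nonneg hm0.le (by norm_num), ← Real.sqrt_eq_rpow]
  have hsq : Real.sqrt m = Real.sqrt (2*Real.pi) * r := by
    rw [hrdef, ← Real.sqrt_mul (by positivity)]
    congr 1
    field_simp
  have h2 : volume E ^ ((1:ℝ)/q) ≤ 2 * (volume E / 2) ^ ((1:ℝ)/q) := by
    have hμeq : volume E = 2 * (volume E / 2) :=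
      (ENNReal.mul_div_cancel' (by norm_num) (by norm_num)).symm
    calc volume E ^ ((1:ℝ)/q) = (2 * (volume E / 2)) ^ ((1:ℝ)/q) := by rw [← hμeq]
      _ = (2:ℝ≥0∞) ^ ((1:ℝ)/q) * (volume E / 2) ^ ((1:ℝ)/q) :=
          ENNReal.mul_rpow_of_nonneg _ _ (by positivity)
      _ ≤ (2:ℝ≥0∞) ^ (1:ℝ) * (volume E / 2) ^ ((1:ℝ)/q) :=
          mul_le_mul_left (ENNReal.rpow_le_rpow_of_exponent_le one_le_two
            (by rw [div_le_one hq0]; exact hq)) _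
      _ = 2 * (volume E / 2) ^ ((1:ℝ)/q) := by rw [ENNReal.rpow_one]
  calc volume E ^ ((1:ℝ)/2 + 1/q) * ENNReal.ofReal t
      = ENNReal.ofReal (Real.sqrt (2*Real.pi)) * ENNReal.ofReal r *
          volume E ^ ((1:ℝ)/q) * ENNReal.ofReal t := by
        rw [hexp, hsq, ENNReal.ofReal_mul (Real.sqrt_nonneg _)]
        try ring
    _ ≤ ENNReal.ofReal (Real.sqrt (2*Real.pi)) * ENNReal.ofReal r *
          (2 * (volume E / 2) ^ ((1:ℝ)/q)) * ENNReal.ofReal t := by gcongr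
    _ = ENNReal.ofReal (2 * Real.sqrt (2*Real.pi)) *
          (ENNReal.ofReal (t*r) * (volume E / 2) ^ ((1:ℝ)/q)) := by
        rw [ENNReal.ofReal_mul (by norm_num : (0:ℝ) ≤ 2), ENNReal.ofReal_mul ht.le,
          ENNReal.ofReal_ofNat]
        ring
    _ ≤ ENNReal.ofReal 6 *
          (ENNReal.ofReal (t*r) * (volume E / 2) ^ ((1:ℝ)/q)) := by
        gcongr
        nlinarith [Real.sq_sqrt (by positivity : (0:ℝ) ≤ 2*Real.pi),
          Real.sqrt_nonneg (2*Real.pi), Real.pi_le_four,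
          sq_nonneg (Real.sqrt (2*Real.pi) - 3)]
    _ ≤ _ := mul_le_mul_right hNlow _

/-- Core estimate for part (ii). -/
lemma core2 (E : Set E2) (t : ℝ) (ht : 0 < t) (x0 : E2) (g : E2 → E2)
    (hg : ∀ x, ‖g x‖ = t * dist x x0) :
    volume E ^ ((1:ℝ)/2) * ENNReal.ofReal t ≤
      ENNReal.ofReal 2 * ⨆ x ∈ E, ENNReal.ofReal ‖g x‖ := by
  set S := ⨆ x ∈ E, ENNReal.ofReal ‖g x‖ with hS
  rcases eq_or_ne (volume E) 0 with h0 | h0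
  · rw [h0, ENNReal.zero_rpow_of_pos (by norm_num), zero_mul]; exact zero_le
  rcases eq_or_ne S ⊤ with htop | htop
  · rw [htop, ENNReal.mul_top (by simp)]; exact le_top
  have hsub : E ⊆ Metric.closedBall x0 (S.toReal / t) := by
    intro x hx
    have h1 : ENNReal.ofReal ‖g x‖ ≤ S :=
      le_biSup (fun x : E2 => ENNReal.ofReal ‖g x‖) hx
    have h2 : ‖g x‖ ≤ S.toReal := (ENNReal.ofReal_le_iff_le_toReal htop).1 h1
    rw [hg x] at h2
    rw [Metric.mem_closedBall, le_div_iff₀ ht]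
    linarith
  have hvol : volume E ≤ ENNReal.ofReal (S.toReal/t) ^ 2 * ENNReal.ofReal Real.pi :=
    (measure_mono hsub).trans_eq (E2_closedBall _ _)
  have hst : 0 ≤ S.toReal / t := by positivity
  have hhalf : volume E ^ ((1:ℝ)/2) ≤
      ENNReal.ofReal (S.toReal/t) * ENNReal.ofReal (Real.sqrt Real.pi) := by
    calc volume E ^ ((1:ℝ)/2)
        ≤ (ENNReal.ofReal (S.toReal/t) ^ 2 * ENNReal.ofReal Real.pi) ^ ((1:ℝ)/2) :=
          ENNReal.rpow_le_rpow hvol (by norm_num)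
      _ = ENNReal.ofReal (S.toReal/t) * ENNReal.ofReal (Real.sqrt Real.pi) := by
          rw [← ENNReal.ofReal_pow hst, ← ENNReal.ofReal_mul (by positivity),
            ENNReal.ofReal_rpow_of_nonneg (by positivity) (by norm_num),
            ← Real.sqrt_eq_rpow, Real.sqrt_mul (sq_nonneg _), Real.sqrt_sq hst,
            ENNReal.ofReal_mul hst]
  calc volume E ^ ((1:ℝ)/2) * ENNReal.ofReal t
      ≤ ENNReal.ofReal (S.toReal/t) * ENNReal.ofReal (Real.sqrt Real.pi) * ENNReal.ofReal t :=
        mul_le_mul_left hhalf _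
    _ = ENNReal.ofReal (Real.sqrt Real.pi) * ENNReal.ofReal (S.toReal/t * t) := by
        rw [ENNReal.ofReal_mul hst]
        ring
    _ = ENNReal.ofReal (Real.sqrt Real.pi) * ENNReal.ofReal S.toReal := by
        rw [div_mul_cancel₀ _ ht.ne']
    _ ≤ ENNReal.ofReal 2 * S := by
        gcongr
        · nlinarith [Real.sq_sqrt Real.pi_pos.le, Real.sqrt_nonneg Real.pi, Real.pi_le_four]
        · exact ENNReal.ofReal_toReal_le


lemma diam_top_of_volume_top (E : Set E2) (h : volume E = ⊤) : EMetric.diam E = ⊤ := by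
  by_contra hd
  have h1 := volume_le_diam E
  rw [h, top_le_iff] at h1
  exact ENNReal.mul_ne_top ENNReal.ofReal_ne_top (ENNReal.pow_ne_top hd) h1

/-- **Estimates for infinitesimal rigid motions on measurable sets** (Lemma 4.2). -/
theorem rigid_motion_estimates (q : ℝ) (hq : 1 ≤ q) :
    ∃ c : ℝ, 0 < c ∧
      ∀ E : Set E2, MeasurableSet E →
      ∀ A : Matrix (Fin 2) (Fin 2) ℝ, Matrix.transpose A = -A → ∀ b : E2,
        ((volume E) ^ ((1 : ℝ) / 2 + 1 / q) * ENNReal.ofReal (matNorm A) ≤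
          ENNReal.ofReal c *
            eLpNorm (rigid A b) (ENNReal.ofReal q) (volume.restrict E)) ∧
        ((volume E) ^ ((1 : ℝ) / 2) * ENNReal.ofReal (matNorm A) ≤
          ENNReal.ofReal c * ⨆ x ∈ E, ENNReal.ofReal ‖rigid A b x‖) ∧
        (∀ x ∈ E,
          (volume E) ^ ((1 : ℝ) / 2 + 1 / q) * ENNReal.ofReal ‖rigid A b x‖ ≤
            ENNReal.ofReal c * EMetric.diam E *
              eLpNorm (rigid A b) (ENNReal.ofReal q) (volume.restrict E)) := by
  refine ⟨16, by norm_num, fun E hE A hA b => ?_⟩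
  have hq0 : (0:ℝ) < q := lt_of_lt_of_le one_pos hq
  have hp0 : ENNReal.ofReal q ≠ 0 := by
    simp only [Ne, ENNReal.ofReal_eq_zero, not_le]; linarith
  rcases eq_or_ne (A 1 0) 0 with hω0 | hω0
  · -- the skew matrix is zero, `rigid A b` is the constant `b`
    have hmat : matNorm A = 0 := by rw [matNorm_skew hA, hω0, abs_zero, mul_zero]
    have hb : rigid A b = fun _ => b := rigid_const hA hω0 b
    refine ⟨?_, ?_, ?_⟩
    · rw [hmat, ENNReal.ofReal_zero, mul_zero]; exact zero_le
    · rw [hmat, ENNReal.ofReal_zero, mul_zero]; exact zero_le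
    · intro x hx
      rcases eq_or_ne (volume E) 0 with h0 | h0
      · rw [h0, ENNReal.zero_rpow_of_pos (by positivity), zero_mul]; exact zero_le
      rcases eq_or_ne b 0 with rfl | hbne
      · have hz : rigid A 0 x = 0 := by rw [hb]
        rw [hz, norm_zero, ENNReal.ofReal_zero, mul_zero]; exact zero_le
      have hres : volume.restrict E ≠ 0 := by
        rw [Ne, Measure.restrict_eq_zero]; exact h0
      have hNc : eLpNorm (rigid A b) (ENNReal.ofReal q) (volume.restrict E)
          = ENNReal.ofReal ‖b‖ * volume E ^ ((1:ℝ)/q) := by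
        rw [hb, eLpNorm_const b hp0 hres, Measure.restrict_apply_univ,
          ENNReal.toReal_ofReal hq0.le, ← ofReal_norm]
      have hbx : rigid A b x = b := by rw [hb]
      rw [hbx, hNc]
      rcases eq_or_ne (volume E) ⊤ with htop | htop
      · have hd : EMetric.diam E = ⊤ := diam_top_of_volume_top E htop
        have h1 : ENNReal.ofReal ‖b‖ ≠ 0 := (ENNReal.ofReal_pos.2 (norm_pos_iff.2 hbne)).ne'
        have hR : ENNReal.ofReal 16 * EMetric.diam E *
            (ENNReal.ofReal ‖b‖ * volume E ^ ((1:ℝ)/q)) = ⊤ := by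
          rw [hd, htop, ENNReal.top_rpow_of_pos (by positivity), ENNReal.mul_top h1]
          simp
        rw [hR]; exact le_top
      have hsplit := ENNReal.rpow_add ((1:ℝ)/2) ((1:ℝ)/q) h0 htop
      calc volume E ^ ((1:ℝ)/2 + 1/q) * ENNReal.ofReal ‖b‖
          = volume E ^ ((1:ℝ)/2) * (ENNReal.ofReal ‖b‖ * volume E ^ ((1:ℝ)/q)) := by
            rw [hsplit]; ring
        _ ≤ (ENNReal.ofReal (Real.sqrt Real.pi) * EMetric.diam E) *
              (ENNReal.ofReal ‖b‖ * volume E ^ ((1:ℝ)/q)) :=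
            mul_le_mul_left (sqrt_volume_le E) _
        _ ≤ ENNReal.ofReal 16 * EMetric.diam E *
              (ENNReal.ofReal ‖b‖ * volume E ^ ((1:ℝ)/q)) := by
            gcongr
            nlinarith [Real.sq_sqrt Real.pi_pos.le, Real.sqrt_nonneg Real.pi, Real.pi_le_four]
  · -- genuinely rotational case
    have ht : (0:ℝ) < |A 1 0| := abs_pos.2 hω0
    set x0 : E2 := (WithLp.equiv 2 (Fin 2 → ℝ)).symm ![-(b 1)/(A 1 0), b 0/(A 1 0)] with hx0
    have hgnorm : ∀ x, ‖rigid A b x‖ = |A 1 0| * dist x x0 := norm_rigid_eq hA b hω0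
    have hcore1 := core1 q hq E hE _ ht x0 (rigid A b) hgnorm
    have hcore2 := core2 E _ ht x0 (rigid A b) hgnorm
    have hmat : ENNReal.ofReal (matNorm A)
        = ENNReal.ofReal (Real.sqrt 2) * ENNReal.ofReal |A 1 0| := by
      rw [matNorm_skew hA, ENNReal.ofReal_mul (Real.sqrt_nonneg _)]
    have hs2 : Real.sqrt 2 ≤ 2 := by
      nlinarith [Real.sq_sqrt (by norm_num : (0:ℝ) ≤ 2), Real.sqrt_nonneg 2]
    refine ⟨?_, ?_, ?_⟩
    · calc volume E ^ ((1:ℝ)/2 + 1/q) * ENNReal.ofReal (matNorm A)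
          = ENNReal.ofReal (Real.sqrt 2) *
              (volume E ^ ((1:ℝ)/2 + 1/q) * ENNReal.ofReal |A 1 0|) := by rw [hmat]; ring
        _ ≤ ENNReal.ofReal (Real.sqrt 2) * (ENNReal.ofReal 6 *
              eLpNorm (rigid A b) (ENNReal.ofReal q) (volume.restrict E)) :=
            mul_le_mul_right hcore1 _
        _ = ENNReal.ofReal (Real.sqrt 2 * 6) *
              eLpNorm (rigid A b) (ENNReal.ofReal q) (volume.restrict E) := by
            rw [ENNReal.ofReal_mul (Real.sqrt_nonneg _)]; ring
        _ ≤ ENNReal.ofReal 16 *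
              eLpNorm (rigid A b) (ENNReal.ofReal q) (volume.restrict E) := by
            gcongr
            nlinarith
    · calc volume E ^ ((1:ℝ)/2) * ENNReal.ofReal (matNorm A)
          = ENNReal.ofReal (Real.sqrt 2) *
              (volume E ^ ((1:ℝ)/2) * ENNReal.ofReal |A 1 0|) := by rw [hmat]; ring
        _ ≤ ENNReal.ofReal (Real.sqrt 2) * (ENNReal.ofReal 2 *
              ⨆ x ∈ E, ENNReal.ofReal ‖rigid A b x‖) := mul_le_mul_right hcore2 _
        _ = ENNReal.ofReal (Real.sqrt 2 * 2) * ⨆ x ∈ E, ENNReal.ofReal ‖rigid A b x‖ := by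
            rw [ENNReal.ofReal_mul (Real.sqrt_nonneg _)]; ring
        _ ≤ ENNReal.ofReal 16 * ⨆ x ∈ E, ENNReal.ofReal ‖rigid A b x‖ := by
            gcongr
            nlinarith
    · intro x hx
      set N := eLpNorm (rigid A b) (ENNReal.ofReal q) (volume.restrict E) with hNdef
      rcases eq_or_ne N 0 with hN0 | hN0
      · have hmeasg : AEStronglyMeasurable (rigid A b) (volume.restrict E) :=
          (continuous_rigid A b).aestronglyMeasurable
        have hae : ∀ᵐ y ∂(volume.restrict E), rigid A b y = 0 :=
          (eLpNorm_eq_zero_iff hmeasg hp0).1 hN0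
        have h2 : ∀ᵐ y ∂(volume.restrict E), y ∈ ({x0} : Set E2) := by
          refine hae.mono fun y hy => ?_
          have h3 : |A 1 0| * dist y x0 = 0 := by rw [← hgnorm y, hy, norm_zero]
          have h4 : dist y x0 = 0 := by
            rcases mul_eq_zero.1 h3 with h | h
            · exact absurd h ht.ne'
            · exact h
          exact dist_eq_zero.1 h4
        have h5 := ae_iff.1 h2
        rw [Measure.restrict_apply' hE] at h5
        have h6 : volume (E \ ({x0} : Set E2)) = 0 := by
          simpa [Set.diff_eq, Set.inter_comm, Set.compl_def] using h5
        have hμ0 : volume E = 0 := by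
          have h7 : volume E ≤ volume (E \ ({x0} : Set E2)) + volume ({x0} : Set E2) :=
            (measure_mono (fun y hy => by
              by_cases h : y ∈ ({x0} : Set E2)
              exacts [Or.inr h, Or.inl ⟨hy, h⟩])).trans
              (measure_union_le (μ := volume) _ _)
          rw [h6, measure_singleton, add_zero] at h7
          exact le_antisymm h7 (zero_le)
        rw [hμ0, ENNReal.zero_rpow_of_pos (by positivity), zero_mul]
        exact zero_le
      rcases eq_or_ne (EMetric.diam E) ⊤ with hd | hd
      · rw [hd, ENNReal.mul_top (by simp), ENNReal.top_mul hN0]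
        exact le_top
      rcases eq_or_ne (volume E) 0 with hμ0 | hμ0
      · rw [hμ0, ENNReal.zero_rpow_of_pos (by positivity), zero_mul]; exact zero_le
      have hμfin : volume E ≠ ⊤ := fun hcon => hd (diam_top_of_volume_top E hcon)
      have hbdd : Bornology.IsBounded E := Metric.isBounded_iff_ediam_ne_top.2 hd
      have hdm0 : (0:ℝ) ≤ Metric.diam E := Metric.diam_nonneg
      have hofd : ENNReal.ofReal (Metric.diam E) = EMetric.diam E := by
        rw [Metric.diam]; exact ENNReal.ofReal_toReal hd
      have hres : volume.restrict E ≠ 0 := by rw [Ne, Measure.restrict_eq_zero]; exact hμ0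
      have hpt : ∀ y ∈ E, ‖rigid A b x‖ ≤ ‖rigid A b y‖ + |A 1 0| * Metric.diam E := by
        intro y hy
        have h1 : ‖rigid A b x - rigid A b y‖ = |A 1 0| * dist x y := norm_rigid_sub hA b x y
        have h2 : dist x y ≤ Metric.diam E := Metric.dist_le_diam_of_mem hbdd hx hy
        have h3 := norm_sub_norm_le (rigid A b x) (rigid A b y)
        nlinarith [mul_le_mul_of_nonneg_left h2 ht.le]
      have hconst : eLpNorm (fun _ : E2 => rigid A b x) (ENNReal.ofReal q) (volume.restrict E)
          = ENNReal.ofReal ‖rigid A b x‖ * volume E ^ ((1:ℝ)/q) := by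
        rw [eLpNorm_const _ hp0 hres, Measure.restrict_apply_univ,
          ENNReal.toReal_ofReal hq0.le, ← ofReal_norm]
      have hstep : ENNReal.ofReal ‖rigid A b x‖ * volume E ^ ((1:ℝ)/q) ≤
          N + ENNReal.ofReal (|A 1 0| * Metric.diam E) * volume E ^ ((1:ℝ)/q) := by
        rw [← hconst]
        calc eLpNorm (fun _ : E2 => rigid A b x) (ENNReal.ofReal q) (volume.restrict E)
            ≤ eLpNorm (fun y => ‖rigid A b y‖ + |A 1 0| * Metric.diam E)
                (ENNReal.ofReal q) (volume.restrict E) := by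
              refine eLpNorm_mono_ae ?_
              refine (ae_restrict_mem hE).mono fun y hy => ?_
              have h8 := hpt y hy
              rw [Real.norm_eq_abs, abs_of_nonneg (by positivity)]
              exact h8
          _ ≤ eLpNorm (fun y => ‖rigid A b y‖) (ENNReal.ofReal q) (volume.restrict E) +
              eLpNorm (fun _ : E2 => |A 1 0| * Metric.diam E) (ENNReal.ofReal q)
                (volume.restrict E) :=
              eLpNorm_add_le ((continuous_rigid A b).norm.aestronglyMeasurable)
                aestronglyMeasurable_const
                (by rw [← ENNReal.ofReal_one]; exact ENNReal.ofReal_le_ofReal hq)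
          _ = N + ENNReal.ofReal (|A 1 0| * Metric.diam E) * volume E ^ ((1:ℝ)/q) := by
              rw [eLpNorm_norm, eLpNorm_const _ hp0 hres, Measure.restrict_apply_univ,
                ENNReal.toReal_ofReal hq0.le, Real.enorm_eq_ofReal (by positivity)]
      have hsplit := ENNReal.rpow_add ((1:ℝ)/2) ((1:ℝ)/q) hμ0 hμfin
      have hterm2 : volume E ^ ((1:ℝ)/2) * (ENNReal.ofReal (|A 1 0| * Metric.diam E) *
          volume E ^ ((1:ℝ)/q)) ≤
          ENNReal.ofReal (Metric.diam E) * (ENNReal.ofReal 6 * N) := by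
        calc volume E ^ ((1:ℝ)/2) * (ENNReal.ofReal (|A 1 0| * Metric.diam E) *
            volume E ^ ((1:ℝ)/q))
            = ENNReal.ofReal (Metric.diam E) *
                (volume E ^ ((1:ℝ)/2 + 1/q) * ENNReal.ofReal |A 1 0|) := by
              rw [hsplit, ENNReal.ofReal_mul (abs_nonneg _)]; ring
          _ ≤ ENNReal.ofReal (Metric.diam E) * (ENNReal.ofReal 6 * N) :=
              mul_le_mul_right hcore1 _
      have hof16 : ENNReal.ofReal 8 + ENNReal.ofReal 8 = ENNReal.ofReal 16 := by
        rw [← ENNReal.ofReal_add] <;> norm_num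
      calc volume E ^ ((1:ℝ)/2 + 1/q) * ENNReal.ofReal ‖rigid A b x‖
          = volume E ^ ((1:ℝ)/2) * (ENNReal.ofReal ‖rigid A b x‖ * volume E ^ ((1:ℝ)/q)) := by
            rw [hsplit]; ring
        _ ≤ volume E ^ ((1:ℝ)/2) * (N + ENNReal.ofReal (|A 1 0| * Metric.diam E) *
              volume E ^ ((1:ℝ)/q)) := mul_le_mul_right hstep _
        _ = volume E ^ ((1:ℝ)/2) * N + volume E ^ ((1:ℝ)/2) *
              (ENNReal.ofReal (|A 1 0| * Metric.diam E) * volume E ^ ((1:ℝ)/q)) := by ring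
        _ ≤ (ENNReal.ofReal (Real.sqrt Real.pi) * EMetric.diam E) * N +
              ENNReal.ofReal (Metric.diam E) * (ENNReal.ofReal 6 * N) :=
            add_le_add (mul_le_mul_left (sqrt_volume_le E) _) hterm2
        _ ≤ (ENNReal.ofReal 8 * EMetric.diam E) * N +
              (ENNReal.ofReal 8 * EMetric.diam E) * N := by
            have hπ2 : Real.sqrt Real.pi ≤ 8 := by
              nlinarith [Real.sq_sqrt Real.pi_pos.le, Real.sqrt_nonneg Real.pi,
                Real.pi_le_four]
            have hA1 : (ENNReal.ofReal (Real.sqrt Real.pi) * EMetric.diam E) * N ≤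
                (ENNReal.ofReal 8 * EMetric.diam E) * N :=
              mul_le_mul_left (mul_le_mul_left (ENNReal.ofReal_le_ofReal hπ2) _) _
            have hA2 : ENNReal.ofReal (Metric.diam E) * (ENNReal.ofReal 6 * N) ≤
                (ENNReal.ofReal 8 * EMetric.diam E) * N := by
              calc ENNReal.ofReal (Metric.diam E) * (ENNReal.ofReal 6 * N)
                  = ENNReal.ofReal 6 * (ENNReal.ofReal (Metric.diam E) * N) := by ring
                _ ≤ ENNReal.ofReal 8 * (EMetric.diam E * N) := by
                    refine mul_le_mul' (ENNReal.ofReal_le_ofReal (by norm_num)) ?_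
                    exact mul_le_mul_left (le_of_eq hofd) _
                _ = (ENNReal.ofReal 8 * EMetric.diam E) * N := by ring
            exact add_le_add hA1 hA2
        _ = ENNReal.ofReal 16 * EMetric.diam E * N := by
            rw [← add_mul, ← add_mul, hof16]
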